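/- arXiv:1705.10400 — 2 statements merged into one kernel-verified Lean document; each statement's English description precedes it below -/
import Mathlib

section
/- Let s > 0 and let f̃ : [0,∞) → ℝ be continuously differentiable with M₁ := sup_{x>0}|f̃(x)| < ∞ and M₂ := ∫₀^∞ |f̃'(x)| dx < ∞. Then for all θ ∈ ℝ, |(1 - e^{-s+iθ}) · Σ_{n=1}^∞ f̃(ns) e^{-ns + inθ}| ≤ M₁ + M₂. Consequently |Σ_{n=1}^∞ f̃(ns) e^{-ns} cos(nθ)| ≤ (M₁ + M₂)/√(2 e^{-s}(cosh s - cos θ)). -/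
open Real MeasureTheory

theorem abel_summation_estimate (s : ℝ) (hs : 0 < s) (f f' : ℝ → ℝ) (M₁ M₂ : ℝ)
    (hderiv : ∀ x ∈ Set.Ici (0 : ℝ), HasDerivAt f (f' x) x)
    (hM1 : ∀ x > (0 : ℝ), |f x| ≤ M₁)
    (hint : MeasureTheory.IntegrableOn (fun x => |f' x|) (Set.Ioi (0 : ℝ)))
    (hM2 : (∫ x in Set.Ioi (0 : ℝ), |f' x|) = M₂) (θ : ℝ) :
    ‖((1 - Complex.exp (-(s : ℂ) + Complex.I * (θ : ℂ))) *
        ∑' n : ℕ, ((f (((n : ℝ) + 1) * s) : ℝ) : ℂ) *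
          Complex.exp ((((n : ℝ) + 1 : ℝ) : ℂ) * (-(s : ℂ) + Complex.I * (θ : ℂ))))‖ ≤
      M₁ + M₂ ∧
    |∑' n : ℕ, f (((n : ℝ) + 1) * s) * Real.exp (-((n : ℝ) + 1) * s) *
        Real.cos (((n : ℝ) + 1) * θ)| ≤
      (M₁ + M₂) / Real.sqrt (2 * Real.exp (-s) * (Real.cosh s - Real.cos θ)) := by
  have hM1' : (0 : ℝ) ≤ M₁ := le_trans (abs_nonneg _) (hM1 s hs)
  set w : ℂ := -(s : ℂ) + Complex.I * (θ : ℂ) with hw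
  set z : ℂ := Complex.exp w with hz
  have hwre : w.re = -s := by simp [hw]
  have hwim : w.im = θ := by simp [hw]
  have habsz : ‖z‖ = Real.exp (-s) := by
    rw [hz, Complex.norm_exp, hwre]
  have hz1 : ‖z‖ < 1 := by
    rw [habsz]; exact Real.exp_lt_one_iff.mpr (by linarith)
  have hz0 : 0 < ‖z‖ := by rw [habsz]; exact Real.exp_pos _
  set a : ℕ → ℝ := fun n => f (((n : ℝ) + 1) * s) with ha
  set g : ℕ → ℂ := fun n => (a n : ℂ) * z ^ (n + 1) with hg
  have hterm : ∀ n : ℕ,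
      ((f (((n : ℝ) + 1) * s) : ℝ) : ℂ) * Complex.exp ((((n : ℝ) + 1 : ℝ) : ℂ) * w) = g n := by
    intro n
    have : (((n : ℝ) + 1 : ℝ) : ℂ) = ((n + 1 : ℕ) : ℂ) := by push_cast; ring
    rw [this, Complex.exp_nat_mul]
  have habs_a : ∀ n, |a n| ≤ M₁ := by
    intro n
    exact hM1 _ (by positivity)
  have hnorm_g : ∀ n : ℕ, ‖g n‖ ≤ M₁ * ‖z‖ ^ (n + 1) := by
    intro n
    rw [hg]
    simp only [norm_mul, norm_pow, Complex.norm_real, Real.norm_eq_abs]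
    exact mul_le_mul_of_nonneg_right (habs_a n) (by positivity)
  have hsum_g : Summable g := by
    apply Summable.of_norm
    apply Summable.of_nonneg_of_le (fun n => norm_nonneg _) hnorm_g
    apply Summable.mul_left
    exact ((summable_geometric_of_lt_one hz0.le hz1).comp_injective (add_left_injective 1)).congr
      (fun n => rfl)
  -- integrability of f'
  have hf'eq : ∀ x ∈ Set.Ioi (0 : ℝ), f' x = deriv f x := by
    intro x hx
    exact ((hderiv x (Set.mem_Ici.mpr (le_of_lt (Set.mem_Ioi.mp hx)))).deriv).symm
  have hintf' : IntegrableOn f' (Set.Ioi (0 : ℝ)) := by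
    have hmeas : AEStronglyMeasurable f' (volume.restrict (Set.Ioi (0 : ℝ))) := by
      apply (measurable_deriv f).aestronglyMeasurable.congr
      filter_upwards [MeasureTheory.ae_restrict_mem measurableSet_Ioi] with x hx
      exact (hf'eq x hx).symm
    refine ⟨hmeas, ?_⟩
    have := hint.2
    simpa [MeasureTheory.hasFiniteIntegral_iff_norm] using this
  -- the difference bound
  set d : ℕ → ℝ := fun n => |a (n + 1) - a n| with hd
  have hdle : ∀ n : ℕ, d n ≤ ∫ x in (((n : ℝ) + 1) * s)..(((n : ℝ) + 2) * s), |f' x| := by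
    intro n
    have hab : ((n : ℝ) + 1) * s ≤ ((n : ℝ) + 2) * s := by nlinarith
    have hii : IntervalIntegrable f' volume (((n : ℝ) + 1) * s) (((n : ℝ) + 2) * s) := by
      rw [intervalIntegrable_iff, Set.uIoc_of_le hab]
      apply hintf'.mono_set
      intro x hx
      have := hx.1
      simp only [Set.mem_Ioi]
      nlinarith
    have hftc : f (((n : ℝ) + 2) * s) - f (((n : ℝ) + 1) * s)
        = ∫ x in (((n : ℝ) + 1) * s)..(((n : ℝ) + 2) * s), f' x := by
      symm
      apply intervalIntegral.integral_eq_sub_of_hasDerivAt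
      · intro x hx
        rw [Set.uIcc_of_le hab] at hx
        exact hderiv x (le_trans (by positivity) hx.1)
      · exact hii
    have : a (n + 1) - a n = ∫ x in (((n : ℝ) + 1) * s)..(((n : ℝ) + 2) * s), f' x := by
      rw [← hftc, ha]; push_cast; ring_nf
    rw [hd]
    simp only [this]
    exact intervalIntegral.abs_integral_le_integral_abs hab
  set b : ℕ → ℝ := fun k => ((k : ℝ) + 1) * s with hb
  have hbmono : Monotone b := by
    intro i j hij
    have : (i : ℝ) ≤ j := by exact_mod_cast hij
    simp only [hb]
    nlinarith
  have hbpos : ∀ k, 0 < b k := fun k => by simp only [hb]; positivity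
  have hbint : ∀ k : ℕ, IntervalIntegrable (fun x => |f' x|) volume (b k) (b (k + 1)) := by
    intro k
    rw [intervalIntegrable_iff, Set.uIoc_of_le (hbmono (Nat.le_succ k))]
    apply hint.mono_set
    intro x hx
    exact lt_trans (hbpos k) hx.1
  have hdle' : ∀ n : ℕ, d n ≤ ∫ x in b n..b (n + 1), |f' x| := by
    intro n
    have h1 : b n = ((n : ℝ) + 1) * s := rfl
    have h2 : b (n + 1) = ((n : ℝ) + 2) * s := by simp only [hb]; push_cast; ring
    rw [h1, h2]
    exact hdle n
  have hpartial : ∀ N : ℕ, ∑ n ∈ Finset.range N, d n ≤ M₂ := by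
    intro N
    calc ∑ n ∈ Finset.range N, d n
        ≤ ∑ n ∈ Finset.range N, ∫ x in b n..b (n + 1), |f' x| :=
          Finset.sum_le_sum fun n _ => hdle' n
      _ = ∫ x in (b 0)..(b N), |f' x| :=
          intervalIntegral.sum_integral_adjacent_intervals fun k _ => hbint k
      _ ≤ M₂ := by
          rw [intervalIntegral.integral_of_le (hbmono (Nat.zero_le N)), ← hM2]
          apply MeasureTheory.setIntegral_mono_set hint
          · filter_upwards with x using abs_nonneg _
          · apply HasSubset.Subset.eventuallyLE
            intro x hx
            exact lt_trans (hbpos 0) hx.1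
  have hsum_d : Summable d := summable_of_sum_range_le (fun n => abs_nonneg _) hpartial
  have htsum_d : ∑' n, d n ≤ M₂ := Real.tsum_le_of_sum_range_le (fun n => abs_nonneg _) hpartial
  -- the shifted difference series
  set T : ℕ → ℂ := fun n => ((a (n + 1) - a n : ℝ) : ℂ) * z ^ (n + 2) with hT
  have hnorm_T : ∀ n, ‖T n‖ ≤ d n := by
    intro n
    rw [hT]
    simp only [norm_mul, norm_pow, Complex.norm_real, Real.norm_eq_abs]
    calc |a (n + 1) - a n| * ‖z‖ ^ (n + 2)
        ≤ d n * 1 := by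
          apply mul_le_mul_of_nonneg_left _ (abs_nonneg _)
          exact pow_le_one₀ hz0.le hz1.le
      _ = d n := mul_one _
  have hsum_T : Summable T :=
    Summable.of_norm (Summable.of_nonneg_of_le (fun n => norm_nonneg _) hnorm_T hsum_d)
  have hsum_normT : Summable fun n => ‖T n‖ :=
    Summable.of_nonneg_of_le (fun n => norm_nonneg _) hnorm_T hsum_d
  have hsum_g1 : Summable fun n => g (n + 1) := hsum_g.comp_injective (add_left_injective 1)
  have hsum_az : Summable fun n : ℕ => (a n : ℂ) * z ^ (n + 2) := by
    have := hsum_g.mul_left z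
    apply this.congr
    intro n
    rw [hg]
    ring
  have hkey : (1 - z) * (∑' n, g n) = g 0 + ∑' n, T n := by
    have h1 : z * ∑' n, g n = ∑' n : ℕ, (a n : ℂ) * z ^ (n + 2) := by
      rw [← tsum_mul_left]
      apply tsum_congr
      intro n
      rw [hg]
      ring
    have h2 : (∑' n, g n) = g 0 + ∑' n, g (n + 1) := Summable.tsum_eq_zero_add hsum_g
    have h3 : ∀ n : ℕ, g (n + 1) - (a n : ℂ) * z ^ (n + 2) = T n := by
      intro n
      rw [hg, hT]
      push_cast
      ring
    calc (1 - z) * (∑' n, g n) = (∑' n, g n) - z * ∑' n, g n := by ring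
      _ = g 0 + ∑' n, g (n + 1) - ∑' n : ℕ, (a n : ℂ) * z ^ (n + 2) := by rw [h1, ← h2]
      _ = g 0 + ∑' n : ℕ, (g (n + 1) - (a n : ℂ) * z ^ (n + 2)) := by
          rw [Summable.tsum_sub hsum_g1 hsum_az]; ring
      _ = g 0 + ∑' n, T n := by rw [tsum_congr h3]
  have bound1 : ‖(1 - z) * ∑' n, g n‖ ≤ M₁ + M₂ := by
    rw [hkey]
    calc ‖g 0 + ∑' n, T n‖
        ≤ ‖g 0‖ + ‖∑' n, T n‖ := norm_add_le _ _
      _ ≤ M₁ + M₂ := by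
          apply add_le_add
          · rw [hg]
            simp only [norm_mul, norm_pow, Complex.norm_real, Real.norm_eq_abs]
            calc |a 0| * ‖z‖ ^ (0 + 1)
                ≤ M₁ * 1 := mul_le_mul (habs_a 0) (pow_le_one₀ hz0.le hz1.le)
                    (by positivity) hM1'
              _ = M₁ := mul_one _
          · calc ‖∑' n, T n‖ ≤ ∑' n, ‖T n‖ := norm_tsum_le_tsum_norm hsum_normT
              _ ≤ ∑' n, d n := Summable.tsum_le_tsum hnorm_T hsum_normT hsum_d
              _ ≤ M₂ := htsum_d
  have hgoal_tsum : (∑' n : ℕ, ((f (((n : ℝ) + 1) * s) : ℝ) : ℂ) *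
      Complex.exp ((((n : ℝ) + 1 : ℝ) : ℂ) * w)) = ∑' n, g n := tsum_congr hterm
  -- the first claim
  have claim1 : ‖(1 - z) * ∑' n : ℕ, ((f (((n : ℝ) + 1) * s) : ℝ) : ℂ) *
      Complex.exp ((((n : ℝ) + 1 : ℝ) : ℂ) * w)‖ ≤ M₁ + M₂ := by
    rw [hgoal_tsum]; exact bound1
  -- |1 - z| = sqrt D
  have hcosh : 1 < Real.cosh s := by
    rw [Real.one_lt_cosh]
    exact ne_of_gt hs
  have hD : 0 < 2 * Real.exp (-s) * (Real.cosh s - Real.cos θ) := by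
    have h1 : Real.cos θ ≤ 1 := Real.cos_le_one θ
    have h2 : 0 < Real.exp (-s) := Real.exp_pos _
    nlinarith
  have hzre : z.re = Real.exp (-s) * Real.cos θ := by
    rw [hz, Complex.exp_re, hwre, hwim]
  have hzim : z.im = Real.exp (-s) * Real.sin θ := by
    rw [hz, Complex.exp_im, hwre, hwim]
  have habs1z : ‖1 - z‖
      = Real.sqrt (2 * Real.exp (-s) * (Real.cosh s - Real.cos θ)) := by
    rw [Complex.norm_def]
    congr 1
    rw [Complex.normSq_apply, Complex.sub_re, Complex.sub_im, Complex.one_re, Complex.one_im,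
      hzre, hzim, Real.cosh_eq]
    have hpyth : Real.sin θ ^ 2 + Real.cos θ ^ 2 = 1 := Real.sin_sq_add_cos_sq θ
    have hee : Real.exp (-s) * Real.exp s = 1 := by
      rw [← Real.exp_add]; simp
    linear_combination (Real.exp (-s))^2 * hpyth - hee
  have habs1z_pos : 0 < ‖1 - z‖ := by
    rw [habs1z]; exact Real.sqrt_pos.mpr hD
  have hSbound : ‖∑' n, g n‖
      ≤ (M₁ + M₂) / Real.sqrt (2 * Real.exp (-s) * (Real.cosh s - Real.cos θ)) := by
    rw [le_div_iff₀ (Real.sqrt_pos.mpr hD), ← habs1z]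
    calc ‖∑' n, g n‖ * ‖1 - z‖
        = ‖(1 - z) * ∑' n, g n‖ := by rw [norm_mul]; ring
      _ ≤ M₁ + M₂ := bound1
  -- real part computation
  have hre : ∀ n : ℕ, f (((n : ℝ) + 1) * s) * Real.exp (-((n : ℝ) + 1) * s) *
      Real.cos (((n : ℝ) + 1) * θ) = (g n).re := by
    intro n
    have hzp : z ^ (n + 1) = Complex.exp (((n + 1 : ℕ) : ℂ) * w) :=
      (Complex.exp_nat_mul w (n + 1)).symm
    have hcre : (((n + 1 : ℕ) : ℂ) * w).re = ((n : ℝ) + 1) * (-s) := by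
      simp [Complex.mul_re, hwre, hwim]
    have hcim : (((n + 1 : ℕ) : ℂ) * w).im = ((n : ℝ) + 1) * θ := by
      simp [Complex.mul_im, hwre, hwim]
    rw [hg]
    simp only [Complex.mul_re, Complex.ofReal_re, Complex.ofReal_im, zero_mul, sub_zero,
      hzp, Complex.exp_re, hcre, hcim]
    have : -((n : ℝ) + 1) * s = ((n : ℝ) + 1) * (-s) := by ring
    rw [this]
    ring
  have hre_tsum : (∑' n : ℕ, f (((n : ℝ) + 1) * s) * Real.exp (-((n : ℝ) + 1) * s) *
      Real.cos (((n : ℝ) + 1) * θ)) = (∑' n, g n).re := by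
    rw [Complex.re_tsum hsum_g]
    exact tsum_congr hre
  refine ⟨claim1, ?_⟩
  rw [hre_tsum]
  exact le_trans (Complex.abs_re_le_norm _) hSbound
end

section
/- Let s ∈ (0,1) and let f̃ : [0,∞) → ℝ be twice continuously differentiable with f̃(0) = f₀, |f̃'(x)| ≤ C₁ for 0 ≤ x ≤ 1, and |f̃''(x)| ≤ C₂ (1+x)^N e^{-x/2} for all x ≥ 0, for some constants C₁, C₂ > 0 and N ∈ ℕ. Define r(x) := f̃(x) - f₀. Then there exists a constant C depending only on C₁, C₂, N (not on s) such that for all θ ∈ ℝ, |(1 - e^{-s+iθ})² · Σ_{n=1}^∞ r(ns) e^{-ns + inθ}| ≤ C s. -/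
open Real

lemma mvt_Ici (f f' : ℝ → ℝ) (hf : ∀ x ∈ Set.Ici (0:ℝ), HasDerivAt f (f' x) x)
    {a b : ℝ} (ha : 0 ≤ a) (hab : a < b) :
    ∃ ξ ∈ Set.Ioo a b, f b - f a = (b - a) * f' ξ := by
  have hcont : ContinuousOn f (Set.Icc a b) := by
    intro x hx
    exact ((hf x (le_trans ha hx.1)).continuousAt).continuousWithinAt
  have hderiv : ∀ x ∈ Set.Ioo a b, HasDerivAt f (f' x) x := fun x hx =>
    hf x (le_trans ha hx.1.le)
  obtain ⟨c, hc, hslope⟩ := exists_hasDerivAt_eq_slope f f' hab hcont hderiv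
  refine ⟨c, hc, ?_⟩
  have hne : b - a ≠ 0 := sub_ne_zero.2 hab.ne'
  rw [eq_div_iff hne] at hslope
  linarith [hslope]

lemma poly_le_exp (N : ℕ) (x : ℝ) (hx : 0 ≤ x) :
    (1 + x) ^ N ≤ (4 * N + 4 : ℝ) ^ N * Real.exp (x / 4) := by
  have h1 : (1 + x) ≤ (4 * N + 4 : ℝ) * Real.exp (x / (4 * N + 4)) := by
    have hd : (0:ℝ) < 4 * N + 4 := by positivity
    have := Real.add_one_le_exp (x / (4 * N + 4))
    calc (1 + x) ≤ (4 * N + 4 : ℝ) * (x / (4 * N + 4) + 1) := by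
          rw [mul_add, mul_div_cancel₀ _ hd.ne']
          nlinarith
      _ ≤ (4 * N + 4 : ℝ) * Real.exp (x / (4 * N + 4)) := by
          exact mul_le_mul_of_nonneg_left this hd.le
  calc (1 + x) ^ N ≤ ((4 * N + 4 : ℝ) * Real.exp (x / (4 * N + 4))) ^ N := by
        apply pow_le_pow_left₀ (by linarith) h1 N
    _ = (4 * N + 4 : ℝ) ^ N * Real.exp (x / (4 * N + 4)) ^ N := mul_pow _ _ _
    _ ≤ (4 * N + 4 : ℝ) ^ N * Real.exp (x / 4) := by
        apply mul_le_mul_of_nonneg_left _ (by positivity)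
        rw [← Real.exp_nat_mul]
        apply Real.exp_le_exp.2
        rcases Nat.eq_zero_or_pos N with h | h
        · simp [h]; positivity
        · have hd : (0:ℝ) < 4 * N + 4 := by positivity
          have hN4 : (N:ℝ) / (4 * N + 4) ≤ 1 / 4 := by
            rw [div_le_div_iff₀ hd (by norm_num)]
            push_cast; linarith
          calc (N:ℝ) * (x / (4 * N + 4)) = x * ((N:ℝ) / (4 * N + 4)) := by ring
            _ ≤ x * (1 / 4) := by
                exact mul_le_mul_of_nonneg_left hN4 hx
            _ = x / 4 := by ring

lemma inv_one_sub_exp_neg (t : ℝ) (ht : 0 < t) (ht1 : t ≤ 1) :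
    (1 - Real.exp (-t))⁻¹ ≤ 2 / t := by
  have h1 : Real.exp (-t) ≤ (1 + t)⁻¹ := by
    rw [Real.exp_neg]
    apply inv_anti₀ (by linarith)
    linarith [Real.add_one_le_exp t]
  have h2 : t / 2 ≤ 1 - Real.exp (-t) := by
    have : 1 - (1+t)⁻¹ = t / (1+t) := by field_simp; ring
    have h3 : t / (1 + t) ≥ t / 2 := by
      apply div_le_div_of_nonneg_left ht.le (by linarith) (by linarith)
    linarith [h1, h3, this]
  have hpos : 0 < 1 - Real.exp (-t) := by linarith
  have := inv_anti₀ (by positivity : (0:ℝ) < t / 2) h2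
  calc (1 - Real.exp (-t))⁻¹ ≤ (t / 2)⁻¹ := this
    _ = 2 / t := by rw [inv_div]

lemma second_diff (f f' f'' : ℝ → ℝ)
    (hf : ∀ x ∈ Set.Ici (0:ℝ), HasDerivAt f (f' x) x)
    (hf' : ∀ x ∈ Set.Ici (0:ℝ), HasDerivAt f' (f'' x) x)
    {u h : ℝ} (hu : 0 ≤ u) (hh : 0 < h) :
    ∃ η ∈ Set.Icc u (u + 2*h),
      f (u + 2*h) - 2 * f (u + h) + f u = h^2 * f'' η := by
  set g : ℝ → ℝ := fun x => f (x + h) - f x with hg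
  have hgd : ∀ x ∈ Set.Ici (0:ℝ), HasDerivAt g (f' (x + h) - f' x) x := by
    intro x hx
    have h1 : HasDerivAt (fun y => f (y + h)) (f' (x + h)) x := by
      have := (hf (x + h) (by simp at hx ⊢; linarith)).comp x
        ((hasDerivAt_id x).add_const h)
      simpa [Function.comp_def] using this
    exact h1.sub (hf x hx)
  obtain ⟨ξ, hξ, hξeq⟩ := mvt_Ici g _ hgd hu (by linarith : u < u + h)
  have hξ0 : 0 ≤ ξ := le_trans hu hξ.1.le
  obtain ⟨η, hη, hηeq⟩ := mvt_Ici f' f'' hf' hξ0 (by linarith : ξ < ξ + h)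
  refine ⟨η, ⟨by linarith [hη.1, hξ.1], by linarith [hη.2, hξ.2]⟩, ?_⟩
  have e1 : u + h + h = u + 2*h := by ring
  simp only [hg, e1] at hξeq
  have e2 : u + h - u = h := by ring
  have e3 : ξ + h - ξ = h := by ring
  rw [e2] at hξeq
  rw [e3] at hηeq
  nlinarith [hξeq, hηeq]

set_option maxHeartbeats 1000000 in
theorem second_order_telescoping_estimate (C₁ C₂ : ℝ) (hC1 : 0 < C₁) (hC2 : 0 < C₂) (N : ℕ) :
    ∃ C > 0, ∀ (f f' f'' : ℝ → ℝ) (f₀ s θ : ℝ), s ∈ Set.Ioo (0 : ℝ) 1 →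
      f 0 = f₀ →
      (∀ x ∈ Set.Ici (0 : ℝ), HasDerivAt f (f' x) x) →
      (∀ x ∈ Set.Ici (0 : ℝ), HasDerivAt f' (f'' x) x) →
      ContinuousOn f'' (Set.Ici (0 : ℝ)) →
      (∀ x ∈ Set.Icc (0 : ℝ) 1, |f' x| ≤ C₁) →
      (∀ x ∈ Set.Ici (0 : ℝ), |f'' x| ≤ C₂ * (1 + x) ^ N * Real.exp (-x / 2)) →
      ‖(1 - Complex.exp (-(s : ℂ) + Complex.I * (θ : ℂ))) ^ 2 *
          ∑' n : ℕ, ((f (((n : ℝ) + 1) * s) - f₀ : ℝ) : ℂ) *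
            Complex.exp ((((n : ℝ) + 1 : ℝ) : ℂ) * (-(s : ℂ) + Complex.I * (θ : ℂ)))‖ ≤
        C * s := by
  refine ⟨C₁ + 8 * C₂ * (12 * N + 12 : ℝ) ^ N, by positivity, ?_⟩
  intro f f' f'' f₀ s θ hs hf0 hf hf' hf''cont hC1b hC2b
  obtain ⟨hs0, hs1⟩ := hs
  set w : ℂ := -(s : ℂ) + Complex.I * (θ : ℂ) with hw
  set z : ℂ := Complex.exp w with hzdef
  have hzabs : ‖z‖ = Real.exp (-s) := by
    rw [hzdef, Complex.norm_exp]
    congr 1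
    simp [hw]
  have hzlt : ‖z‖ < 1 := by
    rw [hzabs]; exact Real.exp_lt_one_iff.2 (by linarith)
  have hzle : ‖z‖ ≤ 1 := hzlt.le
  -- r and a
  set r : ℝ → ℝ := fun x => f x - f₀ with hr
  set a : ℕ → ℝ := fun n => r (n * s) with ha
  have ha0 : a 0 = 0 := by simp [ha, hr, hf0]
  -- global bound on f'
  have hf'glob : ∀ x : ℝ, 0 ≤ x → |f' x| ≤ C₁ + C₂ * x * (1 + x) ^ N := by
    intro x hx
    rcases le_or_gt x 1 with h1 | h1
    · have := hC1b x ⟨hx, h1⟩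
      have hp : (0:ℝ) ≤ C₂ * x * (1 + x) ^ N := by positivity
      linarith
    · obtain ⟨η, hη, heq⟩ := mvt_Ici f' f'' hf' (by norm_num : (0:ℝ) ≤ 1) h1
      have hη0 : (0:ℝ) ≤ η := by linarith [hη.1]
      have hb := hC2b η (Set.mem_Ici.2 hη0)
      have hexp : Real.exp (-η / 2) ≤ 1 := Real.exp_le_one_iff.2 (by linarith)
      have hpow : (1 + η) ^ N ≤ (1 + x) ^ N :=
        pow_le_pow_left₀ (by linarith) (by linarith [hη.2]) N
      have hpow0 : (0:ℝ) ≤ (1 + η) ^ N := by positivity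
      have hfη : |f'' η| ≤ C₂ * (1 + x) ^ N := by
        calc |f'' η| ≤ C₂ * (1 + η) ^ N * Real.exp (-η / 2) := hb
          _ ≤ C₂ * (1 + η) ^ N * 1 := by
              apply mul_le_mul_of_nonneg_left hexp (by positivity)
          _ ≤ C₂ * (1 + x) ^ N := by
              rw [mul_one]
              exact mul_le_mul_of_nonneg_left hpow hC2.le
      have h1' := hC1b 1 ⟨by norm_num, le_refl 1⟩
      have hfx : f' x = f' 1 + (x - 1) * f'' η := by linarith [heq]
      calc |f' x| ≤ |f' 1| + |(x - 1) * f'' η| := by rw [hfx]; exact abs_add_le _ _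
        _ = |f' 1| + (x - 1) * |f'' η| := by
            rw [abs_mul, abs_of_nonneg (by linarith : (0:ℝ) ≤ x - 1)]
        _ ≤ C₁ + (x - 1) * (C₂ * (1 + x) ^ N) := by
            have := mul_le_mul_of_nonneg_left hfη (by linarith : (0:ℝ) ≤ x - 1)
            linarith
        _ ≤ C₁ + C₂ * x * (1 + x) ^ N := by
            have hpx : (x - 1) * (C₂ * (1 + x) ^ N) ≤ x * (C₂ * (1 + x) ^ N) :=
              mul_le_mul_of_nonneg_right (by linarith) (by positivity)
            have he : x * (C₂ * (1 + x) ^ N) = C₂ * x * (1 + x) ^ N := by ring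
            linarith
  -- global bound on r
  have hrglob : ∀ x : ℝ, 0 ≤ x → |r x| ≤ x * (C₁ + C₂ * x * (1 + x) ^ N) := by
    intro x hx
    rcases eq_or_lt_of_le hx with h | h
    · simp [hr, ← h, hf0]
    · obtain ⟨ξ, hξ, heq⟩ := mvt_Ici f f' hf le_rfl h
      have hrx : r x = x * f' ξ := by
        simp only [hr, ← hf0]
        linarith [heq]
      have hξ0 : (0:ℝ) ≤ ξ := hξ.1.le
      have hfξ : |f' ξ| ≤ C₁ + C₂ * x * (1 + x) ^ N := by
        have h1 := hf'glob ξ hξ0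
        have hpow : (1 + ξ) ^ N ≤ (1 + x) ^ N :=
          pow_le_pow_left₀ (by linarith) (by linarith [hξ.2]) N
        have hpow0 : (0:ℝ) ≤ (1 + ξ) ^ N := by positivity
        have : C₂ * ξ * (1 + ξ) ^ N ≤ C₂ * x * (1 + x) ^ N := by
          have hξx : ξ ≤ x := hξ.2.le
          have hmm : ξ * (1 + ξ) ^ N ≤ x * (1 + x) ^ N :=
            mul_le_mul hξx hpow hpow0 hx
          calc C₂ * ξ * (1 + ξ) ^ N = C₂ * (ξ * (1 + ξ) ^ N) := by ring
            _ ≤ C₂ * (x * (1 + x) ^ N) := mul_le_mul_of_nonneg_left hmm hC2.le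
            _ = C₂ * x * (1 + x) ^ N := by ring
        linarith
      rw [hrx, abs_mul, abs_of_nonneg hx]
      exact mul_le_mul_of_nonneg_left hfξ hx
  -- polynomial bound on a
  have haK : ∀ k : ℕ, |a k| ≤ (C₁ + C₂) * ((k : ℝ) + 1) ^ (N + 2) := by
    intro k
    set y : ℝ := (k : ℝ) with hy
    have hy0 : (0:ℝ) ≤ y := Nat.cast_nonneg k
    have hks0 : (0:ℝ) ≤ y * s := by positivity
    have hksk : y * s ≤ y := by nlinarith
    have h := hrglob (y * s) hks0
    have hP1 : (1:ℝ) ≤ (1 + y) ^ N := one_le_pow₀ (by linarith)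
    have hP0 : (0:ℝ) ≤ (1 + y) ^ N := by positivity
    have hmono : (1 + y * s) ^ N ≤ (1 + y) ^ N :=
      pow_le_pow_left₀ (by positivity) (by linarith) N
    have hm0 : (0:ℝ) ≤ (1 + y * s) ^ N := by positivity
    have step1 : |a k| ≤ y * (C₁ + C₂ * y * (1 + y) ^ N) := by
      have h2 : y * s * (C₁ + C₂ * (y * s) * (1 + y * s) ^ N) ≤
          y * (C₁ + C₂ * y * (1 + y) ^ N) := by
        have t1 : y * s * C₁ ≤ y * C₁ := mul_le_mul_of_nonneg_right hksk hC1.le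
        have hA1 : y * s * (y * s) ≤ y * y := mul_le_mul hksk hksk hks0 hy0
        have hA2 : (y * s * (y * s)) * (1 + y * s) ^ N ≤ (y * y) * (1 + y) ^ N :=
          mul_le_mul hA1 hmono hm0 (by positivity)
        have t2 : C₂ * ((y * s * (y * s)) * (1 + y * s) ^ N) ≤
            C₂ * ((y * y) * (1 + y) ^ N) := mul_le_mul_of_nonneg_left hA2 hC2.le
        have lhs_eq : y * s * (C₁ + C₂ * (y * s) * (1 + y * s) ^ N) =
            y * s * C₁ + C₂ * ((y * s * (y * s)) * (1 + y * s) ^ N) := by ring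
        have rhs_eq : y * (C₁ + C₂ * y * (1 + y) ^ N) =
            y * C₁ + C₂ * ((y * y) * (1 + y) ^ N) := by ring
        rw [lhs_eq, rhs_eq]
        linarith
      calc |a k| = |r (y * s)| := rfl
        _ ≤ y * s * (C₁ + C₂ * (y * s) * (1 + y * s) ^ N) := h
        _ ≤ y * (C₁ + C₂ * y * (1 + y) ^ N) := h2
    have hexp2 : ((y:ℝ) + 1) ^ (N + 2) = (1 + y) ^ N * (y + 1) ^ 2 := by
      rw [pow_add]; ring_nf
    have h3 : y ≤ (y + 1) ^ 2 := by nlinarith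
    have t0 : y ≤ (1 + y) ^ N * (y + 1) ^ 2 := by
      calc y ≤ (y + 1) ^ 2 := h3
        _ = 1 * (y + 1) ^ 2 := (one_mul _).symm
        _ ≤ (1 + y) ^ N * (y + 1) ^ 2 :=
            mul_le_mul_of_nonneg_right hP1 (by positivity)
    have t1 : y * C₁ ≤ C₁ * ((1 + y) ^ N * (y + 1) ^ 2) := by
      have := mul_le_mul_of_nonneg_left t0 hC1.le
      linarith [this, (by ring : C₁ * y = y * C₁)]
    have t2 : y * (C₂ * y * (1 + y) ^ N) ≤ C₂ * ((1 + y) ^ N * (y + 1) ^ 2) := by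
      have hyy : y * y ≤ (y + 1) ^ 2 := by nlinarith
      have h5 : (y * y) * (1 + y) ^ N ≤ (y + 1) ^ 2 * (1 + y) ^ N :=
        mul_le_mul_of_nonneg_right hyy hP0
      have h6 : C₂ * ((y * y) * (1 + y) ^ N) ≤ C₂ * ((y + 1) ^ 2 * (1 + y) ^ N) :=
        mul_le_mul_of_nonneg_left h5 hC2.le
      have e1 : y * (C₂ * y * (1 + y) ^ N) = C₂ * ((y * y) * (1 + y) ^ N) := by ring
      have e2 : C₂ * ((y + 1) ^ 2 * (1 + y) ^ N) = C₂ * ((1 + y) ^ N * (y + 1) ^ 2) := by ring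
      linarith
    calc |a k| ≤ y * (C₁ + C₂ * y * (1 + y) ^ N) := step1
      _ = y * C₁ + y * (C₂ * y * (1 + y) ^ N) := by ring
      _ ≤ (C₁ + C₂) * ((1 + y) ^ N * (y + 1) ^ 2) := by linarith
      _ = (C₁ + C₂) * (y + 1) ^ (N + 2) := by rw [hexp2]
  -- summability master
  have hsummaster : ∀ c : ℕ → ℝ, (∀ n, |c n| ≤ (C₁ + C₂) * ((n : ℝ) + 2) ^ (N + 2)) →
      Summable (fun n : ℕ => ((c n : ℝ) : ℂ) * z ^ (n + 1)) := by
    intro c hc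
    set ρ : ℝ := Real.exp (-s) with hρ
    have hρ0 : (0:ℝ) < ρ := Real.exp_pos _
    have hρ1 : ρ < 1 := Real.exp_lt_one_iff.2 (by linarith)
    have base : Summable (fun n : ℕ => (n : ℝ) ^ (N + 2) * ρ ^ n) :=
      summable_pow_mul_geometric_of_norm_lt_one (N + 2)
        (by rwa [Real.norm_of_nonneg hρ0.le])
    have shifted : Summable (fun n : ℕ => ((n : ℝ) + 2) ^ (N + 2) * ρ ^ (n + 2)) := by
      have := (summable_nat_add_iff (f := fun n : ℕ => (n : ℝ) ^ (N + 2) * ρ ^ n) 2).2 base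
      simpa using this
    have maj : Summable (fun n : ℕ =>
        (C₁ + C₂) / ρ * (((n : ℝ) + 2) ^ (N + 2) * ρ ^ (n + 2))) :=
      shifted.mul_left _
    apply Summable.of_norm_bounded maj
    intro n
    have hnorm : ‖((c n : ℝ) : ℂ) * z ^ (n + 1)‖ = |c n| * ‖z‖ ^ (n + 1) := by
      rw [norm_mul, norm_pow]
      rw [Complex.norm_real, Real.norm_eq_abs]
    rw [hnorm, hzabs]
    calc |c n| * ρ ^ (n + 1) ≤ (C₁ + C₂) * ((n : ℝ) + 2) ^ (N + 2) * ρ ^ (n + 1) :=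
        mul_le_mul_of_nonneg_right (hc n) (by positivity)
      _ = (C₁ + C₂) / ρ * (((n : ℝ) + 2) ^ (N + 2) * ρ ^ (n + 2)) := by
        field_simp
        ring
  set A : ℕ → ℂ := fun n => ((a (n + 1) : ℝ) : ℂ) * z ^ (n + 1) with hA
  set am : ℕ → ℝ := fun n => match n with | 0 => 0 | (k + 1) => a k with ham
  have hSA : Summable A := by
    apply hsummaster
    intro n
    calc |a (n+1)| ≤ (C₁ + C₂) * ((n : ℝ) + 1 + 1) ^ (N + 2) := by
          have := haK (n+1); push_cast at this ⊢; linarith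
      _ = (C₁ + C₂) * ((n : ℝ) + 2) ^ (N + 2) := by ring_nf
  have hSA0 : Summable (fun n : ℕ => ((a n : ℝ) : ℂ) * z ^ (n + 1)) := by
    apply hsummaster
    intro n
    calc |a n| ≤ (C₁ + C₂) * ((n : ℝ) + 1) ^ (N + 2) := haK n
      _ ≤ (C₁ + C₂) * ((n : ℝ) + 2) ^ (N + 2) := by
          apply mul_le_mul_of_nonneg_left _ (by positivity)
          apply pow_le_pow_left₀ (by positivity) (by linarith)
  have hSAm : Summable (fun n : ℕ => ((am n : ℝ) : ℂ) * z ^ (n + 1)) := by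
    apply hsummaster
    intro n
    match n with
    | 0 => simp [ham]; positivity
    | (k+1) =>
      show |a k| ≤ _
      calc |a k| ≤ (C₁ + C₂) * ((k : ℝ) + 1) ^ (N + 2) := haK k
        _ ≤ (C₁ + C₂) * (((k+1 : ℕ) : ℝ) + 2) ^ (N + 2) := by
            apply mul_le_mul_of_nonneg_left _ (by positivity)
            apply pow_le_pow_left₀ (by positivity) (by push_cast; linarith)
  -- rewrite goal sum as ∑' A
  have hgoal_sum : (∑' n : ℕ, ((f (((n : ℝ) + 1) * s) - f₀ : ℝ) : ℂ) *
        Complex.exp ((((n : ℝ) + 1 : ℝ) : ℂ) * w)) = ∑' n, A n := by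
    apply tsum_congr
    intro n
    have h1 : ((((n : ℝ) + 1 : ℝ)) : ℂ) = ((n + 1 : ℕ) : ℂ) := by push_cast; ring
    rw [h1, Complex.exp_nat_mul]
    congr 1
    simp only [hA, ha, hr]
    push_cast
    ring_nf
  -- telescoping
  set B : ℕ → ℂ := fun n => ((a (n + 1) - 2 * a n + am n : ℝ) : ℂ) * z ^ (n + 1) with hB
  have htel : (1 - z) ^ 2 * (∑' n, A n) = ∑' n, B n := by
    have hBsplit : ∀ n, B n = A n - 2 * (((a n : ℝ) : ℂ) * z ^ (n + 1)) +
        ((am n : ℝ) : ℂ) * z ^ (n + 1) := by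
      intro n
      simp only [hB, hA]
      push_cast
      ring
    have hS1 : (∑' n : ℕ, ((a n : ℝ) : ℂ) * z ^ (n + 1)) = z * ∑' n, A n := by
      rw [Summable.tsum_eq_zero_add hSA0]
      have e0 : ((a 0 : ℝ) : ℂ) * z ^ (0 + 1) = 0 := by
        rw [ha0]; simp
      rw [e0, zero_add]
      have e1 : ∀ n : ℕ, ((a (n + 1) : ℝ) : ℂ) * z ^ (n + 1 + 1) = z * A n := by
        intro n
        simp only [hA]
        ring
      rw [tsum_congr e1, tsum_mul_left]
    have hS2 : (∑' n : ℕ, ((am n : ℝ) : ℂ) * z ^ (n + 1)) =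
        z * ∑' n : ℕ, ((a n : ℝ) : ℂ) * z ^ (n + 1) := by
      rw [Summable.tsum_eq_zero_add hSAm]
      have e0 : ((am 0 : ℝ) : ℂ) * z ^ (0 + 1) = 0 := by
        show ((0 : ℝ) : ℂ) * z ^ (0 + 1) = 0
        simp
      rw [e0, zero_add]
      have e1 : ∀ n : ℕ, ((am (n + 1) : ℝ) : ℂ) * z ^ (n + 1 + 1) =
          z * (((a n : ℝ) : ℂ) * z ^ (n + 1)) := by
        intro n
        show ((a n : ℝ) : ℂ) * z ^ (n + 1 + 1) = _
        ring
      rw [tsum_congr e1, tsum_mul_left]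
    have hsum2 : Summable (fun n : ℕ => 2 * (((a n : ℝ) : ℂ) * z ^ (n + 1))) :=
      hSA0.mul_left 2
    have key : (∑' n, B n) = (∑' n, A n) -
        2 * (∑' n : ℕ, ((a n : ℝ) : ℂ) * z ^ (n + 1)) +
        ∑' n : ℕ, ((am n : ℝ) : ℂ) * z ^ (n + 1) := by
      calc (∑' n, B n) = ∑' n, (A n - 2 * (((a n : ℝ) : ℂ) * z ^ (n + 1)) +
            ((am n : ℝ) : ℂ) * z ^ (n + 1)) := tsum_congr hBsplit
        _ = _ := by
          rw [Summable.tsum_add (hSA.sub hsum2) hSAm, Summable.tsum_sub hSA hsum2, tsum_mul_left]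
    rw [key, hS2, hS1]
    ring
  -- bound on B 0
  have hB0 : ‖B 0‖ ≤ C₁ * s := by
    have hB0eq : B 0 = ((a 1 : ℝ) : ℂ) * z ^ 1 := by
      simp only [hB]
      have : a (0 + 1) - 2 * a 0 + am 0 = a 1 := by
        rw [ha0]
        show a 1 - 2 * 0 + 0 = a 1
        ring
      rw [this]
    have ha1 : |a 1| ≤ C₁ * s := by
      obtain ⟨ξ, hξ, heq⟩ := mvt_Ici f f' hf le_rfl hs0
      have hrs : a 1 = s * f' ξ := by
        simp only [ha, hr, ← hf0]
        push_cast
        rw [one_mul]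
        linarith [heq]
      have hfξ : |f' ξ| ≤ C₁ := hC1b ξ ⟨hξ.1.le, by linarith [hξ.2]⟩
      rw [hrs, abs_mul, abs_of_nonneg hs0.le]
      calc s * |f' ξ| ≤ s * C₁ := mul_le_mul_of_nonneg_left hfξ hs0.le
        _ = C₁ * s := mul_comm _ _
    have e : ‖B 0‖ = |a 1| * ‖z‖ := by
      rw [hB0eq, norm_mul, Complex.norm_real, Real.norm_eq_abs, pow_one]
    rw [e]
    have := mul_le_mul ha1 hzle (norm_nonneg _) (by positivity : (0:ℝ) ≤ C₁ * s)
    linarith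
  -- bound on B (m+1)
  set q : ℝ := Real.exp (-(s/4)) with hq
  have hq1 : q < 1 := Real.exp_lt_one_iff.2 (by linarith)
  have hq0 : 0 < q := Real.exp_pos _
  have hBm : ∀ m : ℕ, ‖B (m + 1)‖ ≤ s^2 * C₂ * (12 * N + 12 : ℝ) ^ N * q ^ m := by
    intro m
    set u : ℝ := (m : ℝ) * s with hu
    have hu0 : (0:ℝ) ≤ u := by positivity
    obtain ⟨η, hη, heq⟩ := second_diff f f' f'' hf hf' hu0 hs0
    have hcoef : a (m + 2) - 2 * a (m + 1) + a m = s ^ 2 * f'' η := by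
      simp only [ha, hr]
      push_cast
      have e1 : ((m : ℝ) + 2) * s = u + 2 * s := by rw [hu]; ring
      have e2 : ((m : ℝ) + 1) * s = u + s := by rw [hu]; ring
      rw [e1, e2]
      linarith [heq]
    have hamm : am (m + 1) = a m := rfl
    have hBeq : B (m + 1) = ((s ^ 2 * f'' η : ℝ) : ℂ) * z ^ (m + 2) := by
      simp only [hB, hamm]
      rw [show a (m + 1 + 1) - 2 * a (m + 1) + a m = s ^ 2 * f'' η from hcoef]
    have hη0 : (0:ℝ) ≤ η := le_trans hu0 hη.1
    -- bound |f'' η|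
    have hfη : |f'' η| ≤ C₂ * (12 * N + 12 : ℝ) ^ N * q ^ m := by
      have hb := hC2b η (Set.mem_Ici.2 hη0)
      have hp1 : (1 + η) ^ N ≤ (3 + u) ^ N :=
        pow_le_pow_left₀ (by linarith) (by linarith [hη.2, hs1]) N
      have hp2 : (3 + u) ^ N ≤ (3 * (1 + u)) ^ N :=
        pow_le_pow_left₀ (by linarith) (by linarith) N
      have hp3 : (3 * (1 + u)) ^ N = 3 ^ N * (1 + u) ^ N := mul_pow _ _ _
      have hp4 : (1 + u) ^ N ≤ (4 * N + 4 : ℝ) ^ N * Real.exp (u / 4) :=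
        poly_le_exp N u hu0
      have hexp1 : Real.exp (-η / 2) ≤ Real.exp (-u / 2) :=
        Real.exp_le_exp.2 (by linarith [hη.1])
      have hqm : Real.exp (u / 4) * Real.exp (-u / 2) = Real.exp (-(u / 4)) := by
        rw [← Real.exp_add]; ring_nf
      have hqm2 : Real.exp (-(u / 4)) = q ^ m := by
        rw [hq, ← Real.exp_nat_mul]
        congr 1
        rw [hu]; ring
      calc |f'' η| ≤ C₂ * (1 + η) ^ N * Real.exp (-η / 2) := hb
        _ ≤ C₂ * (3 ^ N * ((4 * N + 4 : ℝ) ^ N * Real.exp (u / 4))) * Real.exp (-u / 2) := by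
            apply mul_le_mul _ hexp1 (by positivity) (by positivity)
            apply mul_le_mul_of_nonneg_left _ hC2.le
            calc (1 + η) ^ N ≤ (3 * (1 + u)) ^ N := le_trans hp1 hp2
              _ = 3 ^ N * (1 + u) ^ N := hp3
              _ ≤ 3 ^ N * ((4 * N + 4 : ℝ) ^ N * Real.exp (u / 4)) :=
                  mul_le_mul_of_nonneg_left hp4 (by positivity)
        _ = C₂ * (3 * (4 * N + 4 : ℝ)) ^ N * (Real.exp (u / 4) * Real.exp (-u / 2)) := by
            rw [mul_pow]; ring
        _ = C₂ * (12 * N + 12 : ℝ) ^ N * q ^ m := by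
            rw [hqm, hqm2, show (3 : ℝ) * (4 * N + 4) = 12 * N + 12 from by ring]
    have eabs : ‖B (m + 1)‖ = |s ^ 2 * f'' η| * ‖z‖ ^ (m + 2) := by
      rw [hBeq, norm_mul, norm_pow, Complex.norm_real, Real.norm_eq_abs]
    rw [eabs]
    have step1 : |s ^ 2 * f'' η| * ‖z‖ ^ (m + 2) ≤
        s ^ 2 * (C₂ * (12 * N + 12 : ℝ) ^ N * q ^ m) * 1 := by
      apply mul_le_mul _ (pow_le_one₀ (norm_nonneg _) hzle)
        (pow_nonneg (norm_nonneg _) _) (by positivity)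
      rw [abs_mul, abs_of_nonneg (by positivity : (0:ℝ) ≤ s ^ 2)]
      exact mul_le_mul_of_nonneg_left hfη (by positivity)
    calc |s ^ 2 * f'' η| * ‖z‖ ^ (m + 2)
        ≤ s ^ 2 * (C₂ * (12 * N + 12 : ℝ) ^ N * q ^ m) * 1 := step1
      _ = s ^ 2 * C₂ * (12 * N + 12 : ℝ) ^ N * q ^ m := by ring
  -- majorant
  set M : ℕ → ℝ := fun n => match n with
    | 0 => C₁ * s
    | (m + 1) => s^2 * C₂ * (12 * N + 12 : ℝ) ^ N * q ^ m with hM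
  have hMsum : Summable M := by
    apply (summable_nat_add_iff 1).1
    simpa [hM] using (summable_geometric_of_lt_one hq0.le hq1).mul_left
      (s^2 * C₂ * (12 * N + 12 : ℝ) ^ N)
  have hBnorm : ∀ n, ‖B n‖ ≤ M n := by
    intro n
    match n with
    | 0 => exact hB0
    | (m+1) => exact hBm m
  have hSB : Summable (fun n => ‖B n‖) := by
    apply Summable.of_nonneg_of_le (fun n => norm_nonneg _) hBnorm hMsum
  have hMtsum : ∑' n, M n ≤ (C₁ + 8 * C₂ * (12 * N + 12 : ℝ) ^ N) * s := by
    have h1 : (∑' n, M n) = M 0 + ∑' n, M (n + 1) := Summable.tsum_eq_zero_add hMsum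
    have h2 : (∑' n : ℕ, M (n + 1)) =
        s ^ 2 * C₂ * (12 * N + 12 : ℝ) ^ N * ∑' n : ℕ, q ^ n := by
      show (∑' n : ℕ, s ^ 2 * C₂ * (12 * N + 12 : ℝ) ^ N * q ^ n) = _
      rw [tsum_mul_left]
    have h3 : (∑' n : ℕ, q ^ n) = (1 - q)⁻¹ := tsum_geometric_of_lt_one hq0.le hq1
    have h4 : (1 - q)⁻¹ ≤ 8 / s := by
      have := inv_one_sub_exp_neg (s / 4) (by linarith) (by linarith)
      calc (1 - q)⁻¹ = (1 - Real.exp (-(s / 4)))⁻¹ := rfl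
        _ ≤ 2 / (s / 4) := this
        _ = 8 / s := by
          rw [div_div_eq_mul_div]
          norm_num
    have h5 : s ^ 2 * C₂ * (12 * N + 12 : ℝ) ^ N * (1 - q)⁻¹ ≤
        s ^ 2 * C₂ * (12 * N + 12 : ℝ) ^ N * (8 / s) :=
      mul_le_mul_of_nonneg_left h4 (by positivity)
    have h6 : s ^ 2 * C₂ * (12 * N + 12 : ℝ) ^ N * (8 / s) =
        8 * C₂ * (12 * N + 12 : ℝ) ^ N * s := by
      field_simp
    have hM0 : M 0 = C₁ * s := rfl
    rw [h1, h2, h3, hM0]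
    calc C₁ * s + s ^ 2 * C₂ * (12 * N + 12 : ℝ) ^ N * (1 - q)⁻¹ ≤
        C₁ * s + 8 * C₂ * (12 * N + 12 : ℝ) ^ N * s := by
          rw [← h6]; linarith
      _ = (C₁ + 8 * C₂ * (12 * N + 12 : ℝ) ^ N) * s := by ring
  -- conclude
  rw [hgoal_sum]
  calc ‖(1 - z) ^ 2 * ∑' n, A n‖ = ‖∑' n, B n‖ := by rw [htel]
    _ ≤ ∑' n, ‖B n‖ := norm_tsum_le_tsum_norm hSB
    _ ≤ ∑' n, M n := Summable.tsum_le_tsum hBnorm hSB hMsum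
    _ ≤ (C₁ + 8 * C₂ * (12 * N + 12 : ℝ) ^ N) * s := hMtsum
end
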